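/- Let η(z) = η_0 (1 + λ z)^{(p-2)/2} with η_0 > 0, λ > 0 and p ∈ (1,2) (the Carreau law with η_∞ = 0). Then there exists a constant C_3 > 0 such that for all symmetric matrices K, L: |η(|K|²)K − η(|L|²)L| ≤ C_3 |K − L|^{p-1}. -/
import Mathlib


noncomputable def frob {n : ℕ} (B : Matrix (Fin n) (Fin n) ℝ) : ℝ :=
  Real.sqrt (∑ i, ∑ j, (B i j) ^ 2)

namespace CarreauAux

noncomputable def toE (B : Matrix (Fin 2) (Fin 2) ℝ) : EuclideanSpace ℝ (Fin 2 × Fin 2) :=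
  (WithLp.equiv 2 ((Fin 2 × Fin 2) → ℝ)).symm fun ij => B ij.1 ij.2

lemma frob_eq (B : Matrix (Fin 2) (Fin 2) ℝ) : frob B = ‖toE B‖ := by
  rw [EuclideanSpace.norm_eq, frob]
  congr 1
  rw [Fintype.sum_prod_type]
  refine Finset.sum_congr rfl fun i _ => Finset.sum_congr rfl fun j _ => ?_
  simp [toE, sq_abs]

lemma toE_sub (X Y : Matrix (Fin 2) (Fin 2) ℝ) : toE (X - Y) = toE X - toE Y := rfl

lemma toE_smul (c : ℝ) (X : Matrix (Fin 2) (Fin 2) ℝ) : toE (c • X) = c • toE X := rfl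

/-- Shift-monotonicity of negative powers. -/
lemma shift_rpow {q s t : ℝ} (hq : q < 0) (hs : 0 < s) (hst : s ≤ t) :
    (1 + s) ^ q - (1 + t) ^ q ≤ s ^ q - t ^ q := by
  have key : AntitoneOn (fun u : ℝ => u ^ q - (1 + u) ^ q) (Set.Ioi 0) := by
    have hder : ∀ u : ℝ, 0 < u →
        HasDerivAt (fun u : ℝ => u ^ q - (1 + u) ^ q)
          (q * u ^ (q - 1) - q * (1 + u) ^ (q - 1) * 1) u := by
      intro u hu
      have h1 : HasDerivAt (fun u : ℝ => u ^ q) (q * u ^ (q - 1)) u :=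
        Real.hasDerivAt_rpow_const (Or.inl hu.ne')
      have h2 : HasDerivAt (fun u : ℝ => (1 + u) ^ q) (q * (1 + u) ^ (q - 1) * 1) u := by
        have hbase : HasDerivAt (fun u : ℝ => 1 + u) 1 u := (hasDerivAt_id u).const_add 1
        exact (Real.hasDerivAt_rpow_const (Or.inl (by positivity))).comp u hbase
      exact h1.sub h2
    refine antitoneOn_of_deriv_nonpos (convex_Ioi 0) ?_ ?_ ?_
    · intro u hu
      exact ((hder u hu).differentiableAt).continuousAt.continuousWithinAt
    · intro u hu
      rw [interior_Ioi] at hu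
      exact ((hder u hu).differentiableAt).differentiableWithinAt
    · intro u hu
      rw [interior_Ioi] at hu
      rw [(hder u hu).deriv]
      have hle : (1 + u) ^ (q - 1) ≤ u ^ (q - 1) :=
        Real.rpow_le_rpow_of_nonpos hu (by linarith) (by linarith)
      nlinarith
  have := key hs (lt_of_lt_of_le hs hst : (0:ℝ) < t) hst
  simp only at this
  linarith

/-- Key elementary inequality. -/
lemma sub_rpow_mul_le {p a b : ℝ} (hp1 : 1 < p) (hp2 : p < 2) (hb : 0 < b) (hba : b ≤ a) :
    (b ^ (p - 2) - a ^ (p - 2)) * b ≤ (a - b) ^ (p - 1) := by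
  have ha : 0 < a := lt_of_lt_of_le hb hba
  rcases eq_or_lt_of_le hba with h | h
  · subst h
    simp [Real.zero_rpow (by linarith : p - 1 ≠ 0)]
  · have hab : 0 < a - b := by linarith
    have e1 : b ^ (p - 2) * b = b ^ (p - 1) := by
      rw [show p - 1 = (p - 2) + 1 by ring, Real.rpow_add_one hb.ne']
    have e2 : a ^ (p - 2) * a = a ^ (p - 1) := by
      rw [show p - 1 = (p - 2) + 1 by ring, Real.rpow_add_one ha.ne']
    have e3 : (a - b) ^ (p - 2) * (a - b) = (a - b) ^ (p - 1) := by
      rw [show p - 1 = (p - 2) + 1 by ring, Real.rpow_add_one hab.ne']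
    have h1 : b ^ (p - 1) ≤ a ^ (p - 1) := Real.rpow_le_rpow hb.le hba (by linarith)
    have h2 : a ^ (p - 2) ≤ (a - b) ^ (p - 2) :=
      Real.rpow_le_rpow_of_nonpos hab (by linarith) (by linarith)
    have h3 : a ^ (p - 2) * (a - b) ≤ (a - b) ^ (p - 2) * (a - b) :=
      mul_le_mul_of_nonneg_right h2 hab.le
    nlinarith

/-- The main estimate, in an abstract normed space. -/
lemma key {F : Type*} [NormedAddCommGroup F] [NormedSpace ℝ F]
    (p η₀ lam : ℝ) (hp1 : 1 < p) (hp2 : p < 2) (hη₀ : 0 < η₀) (hlam : 0 < lam)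
    (k l : F) (hba : ‖l‖ ≤ ‖k‖) :
    ‖(η₀ * (1 + lam * ‖k‖ ^ 2) ^ ((p - 2) / 2)) • k -
      (η₀ * (1 + lam * ‖l‖ ^ 2) ^ ((p - 2) / 2)) • l‖ ≤
      (η₀ * lam ^ ((p - 2) / 2) * ((2:ℝ) ^ (2 - p) + 1)) * ‖k - l‖ ^ (p - 1) := by
  by_cases hd : ‖k - l‖ = 0
  · have hkl : k = l := by rwa [norm_sub_eq_zero_iff] at hd
    subst hkl
    simp [hd, Real.zero_rpow (show p - 1 ≠ 0 by linarith)]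
  set q : ℝ := (p - 2) / 2 with hqdef
  have hq : q < 0 := by rw [hqdef]; linarith
  set a : ℝ := ‖k‖ with hadef
  set b : ℝ := ‖l‖ with hbdef
  set d : ℝ := ‖k - l‖ with hddef
  have ha0 : 0 ≤ a := norm_nonneg _
  have hb0 : 0 ≤ b := norm_nonneg _
  have hd0 : 0 ≤ d := norm_nonneg _
  set fa : ℝ := η₀ * (1 + lam * a ^ 2) ^ q with hfa
  set fb : ℝ := η₀ * (1 + lam * b ^ 2) ^ q with hfb
  have hdpos : 0 < d := lt_of_le_of_ne hd0 (Ne.symm hd)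
  have hd2a : d ≤ 2 * a := by
    have := norm_sub_le k l
    rw [← hadef, ← hbdef, ← hddef] at this
    linarith
  have hapos : 0 < a := by linarith
  have hsqba : b ^ 2 ≤ a ^ 2 := by nlinarith
  have hsq : ∀ x : ℝ, 0 ≤ x → (x ^ 2 : ℝ) ^ q = x ^ (p - 2) := by
    intro x hx
    rw [← Real.rpow_natCast x 2, ← Real.rpow_mul hx]
    norm_num
    rw [show (2:ℝ) * q = p - 2 by rw [hqdef]; ring]
  have hlamq : (0:ℝ) < lam ^ q := Real.rpow_pos_of_pos hlam q
  have hdp : (0:ℝ) < d ^ (p - 1) := Real.rpow_pos_of_pos hdpos _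
  have hfapos : 0 < fa := by
    have : (0:ℝ) < (1 + lam * a ^ 2) ^ q := Real.rpow_pos_of_pos (by positivity) q
    positivity
  have hfbfa : fa ≤ fb := by
    rw [hfa, hfb]
    refine mul_le_mul_of_nonneg_left ?_ hη₀.le
    refine Real.rpow_le_rpow_of_nonpos (by positivity) (by nlinarith) hq.le
  have decomp : fa • k - fb • l = fa • (k - l) + (fa - fb) • l := by module
  have hnorm : ‖fa • k - fb • l‖ ≤ fa * d + (fb - fa) * b := by
    rw [decomp]
    refine (norm_add_le _ _).trans ?_
    rw [norm_smul, norm_smul, Real.norm_eq_abs, Real.norm_eq_abs,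
      abs_of_pos hfapos, abs_of_nonpos (by linarith), neg_sub]
  -- Term 1
  have term1 : fa * d ≤ η₀ * lam ^ q * ((2:ℝ) ^ (2 - p)) * d ^ (p - 1) := by
    have s1 : fa ≤ η₀ * (lam ^ q * a ^ (p - 2)) := by
      rw [hfa]
      have h1 : (1 + lam * a ^ 2) ^ q ≤ (lam * a ^ 2) ^ q :=
        Real.rpow_le_rpow_of_nonpos (by positivity) (by linarith) hq.le
      have h2 : (lam * a ^ 2) ^ q = lam ^ q * a ^ (p - 2) := by
        rw [Real.mul_rpow hlam.le (by positivity), hsq a ha0]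
      rw [← h2]
      exact mul_le_mul_of_nonneg_left h1 hη₀.le
    have s2 : a ^ (p - 2) ≤ (d / 2) ^ (p - 2) :=
      Real.rpow_le_rpow_of_nonpos (by positivity) (by linarith) (by linarith)
    have s3 : (d / 2) ^ (p - 2) = d ^ (p - 2) * (2:ℝ) ^ (2 - p) := by
      rw [Real.div_rpow hd0 (by norm_num), div_eq_mul_inv, ← Real.rpow_neg (by norm_num)]
      rw [show -(p - 2) = 2 - p by ring]
    have s4 : d ^ (p - 2) * d = d ^ (p - 1) := by
      rw [show p - 1 = (p - 2) + 1 by ring, Real.rpow_add_one hdpos.ne']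
    calc fa * d ≤ (η₀ * (lam ^ q * a ^ (p - 2))) * d :=
          mul_le_mul_of_nonneg_right s1 hd0
      _ ≤ (η₀ * (lam ^ q * ((d / 2) ^ (p - 2)))) * d :=
          mul_le_mul_of_nonneg_right
            (mul_le_mul_of_nonneg_left (mul_le_mul_of_nonneg_left s2 hlamq.le) hη₀.le) hd0
      _ = η₀ * lam ^ q * ((2:ℝ) ^ (2 - p)) * d ^ (p - 1) := by
          rw [s3, ← s4]; ring
  -- Term 2
  have term2 : (fb - fa) * b ≤ η₀ * lam ^ q * d ^ (p - 1) := by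
    rcases eq_or_lt_of_le hb0 with hb | hb
    · rw [← hb, mul_zero]; positivity
    · have habd : a - b ≤ d := by
        have := norm_sub_norm_le k l
        rw [← hadef, ← hbdef, ← hddef] at this
        linarith
      have s1 : fb - fa ≤ η₀ * (lam ^ q * (b ^ (p - 2) - a ^ (p - 2))) := by
        rw [hfa, hfb]
        have hshift : (1 + lam * b ^ 2) ^ q - (1 + lam * a ^ 2) ^ q ≤
            (lam * b ^ 2) ^ q - (lam * a ^ 2) ^ q :=
          shift_rpow hq (by positivity) (mul_le_mul_of_nonneg_left hsqba hlam.le)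
        have e1 : (lam * b ^ 2) ^ q = lam ^ q * b ^ (p - 2) := by
          rw [Real.mul_rpow hlam.le (by positivity), hsq b hb0]
        have e2 : (lam * a ^ 2) ^ q = lam ^ q * a ^ (p - 2) := by
          rw [Real.mul_rpow hlam.le (by positivity), hsq a ha0]
        rw [e1, e2] at hshift
        nlinarith
      have s2 : (b ^ (p - 2) - a ^ (p - 2)) * b ≤ (a - b) ^ (p - 1) :=
        sub_rpow_mul_le hp1 hp2 hb hba
      have s3 : (a - b) ^ (p - 1) ≤ d ^ (p - 1) :=
        Real.rpow_le_rpow (by linarith) habd (by linarith)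
      calc (fb - fa) * b ≤ (η₀ * (lam ^ q * (b ^ (p - 2) - a ^ (p - 2)))) * b :=
            mul_le_mul_of_nonneg_right s1 hb0
        _ = η₀ * lam ^ q * ((b ^ (p - 2) - a ^ (p - 2)) * b) := by ring
        _ ≤ η₀ * lam ^ q * (a - b) ^ (p - 1) :=
            mul_le_mul_of_nonneg_left s2 (by positivity)
        _ ≤ η₀ * lam ^ q * d ^ (p - 1) :=
            mul_le_mul_of_nonneg_left s3 (by positivity)
  calc ‖fa • k - fb • l‖ ≤ fa * d + (fb - fa) * b := hnorm
    _ ≤ η₀ * lam ^ q * ((2:ℝ) ^ (2 - p)) * d ^ (p - 1) + η₀ * lam ^ q * d ^ (p - 1) := by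
        linarith
    _ = (η₀ * lam ^ q * ((2:ℝ) ^ (2 - p) + 1)) * d ^ (p - 1) := by ring

end CarreauAux

/-- Hölder continuity of exponent `p − 1` of the degenerate (`η_∞ = 0`) Carreau stress map. -/
theorem carreau_holder (p η₀ lam : ℝ) (hp1 : 1 < p) (hp2 : p < 2)
    (hη₀ : 0 < η₀) (hlam : 0 < lam)
    (η : ℝ → ℝ) (hηdef : ∀ z, η z = η₀ * (1 + lam * z) ^ ((p - 2) / 2)) :
    ∃ C₃ > 0, ∀ K L : Matrix (Fin 2) (Fin 2) ℝ, K.IsSymm → L.IsSymm →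
      frob (η (frob K ^ 2) • K - η (frob L ^ 2) • L) ≤ C₃ * (frob (K - L)) ^ (p - 1) := by
  refine ⟨η₀ * lam ^ ((p - 2) / 2) * ((2:ℝ) ^ (2 - p) + 1), ?_, ?_⟩
  · have h1 : (0:ℝ) < lam ^ ((p - 2) / 2) := Real.rpow_pos_of_pos hlam _
    have h2 : (0:ℝ) < (2:ℝ) ^ (2 - p) := Real.rpow_pos_of_pos (by norm_num) _
    positivity
  · intro K L _ _
    have hmain : ∀ K L : Matrix (Fin 2) (Fin 2) ℝ, frob L ≤ frob K →
        frob (η (frob K ^ 2) • K - η (frob L ^ 2) • L) ≤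
          (η₀ * lam ^ ((p - 2) / 2) * ((2:ℝ) ^ (2 - p) + 1)) * (frob (K - L)) ^ (p - 1) := by
      intro K L hle
      rw [CarreauAux.frob_eq, CarreauAux.frob_eq (K - L), CarreauAux.toE_sub,
        CarreauAux.toE_sub, CarreauAux.toE_smul, CarreauAux.toE_smul,
        hηdef, hηdef, CarreauAux.frob_eq K, CarreauAux.frob_eq L]
      exact CarreauAux.key p η₀ lam hp1 hp2 hη₀ hlam _ _
        (by rw [CarreauAux.frob_eq K, CarreauAux.frob_eq L] at hle; exact hle)
    rcases le_total (frob L) (frob K) with h | h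
    · exact hmain K L h
    · have h2 := hmain L K h
      rw [CarreauAux.frob_eq (η (frob L ^ 2) • L - η (frob K ^ 2) • K),
        CarreauAux.frob_eq (L - K), CarreauAux.toE_sub, CarreauAux.toE_sub,
        norm_sub_rev (CarreauAux.toE (η (frob L ^ 2) • L)),
        norm_sub_rev (CarreauAux.toE L)] at h2
      rw [CarreauAux.frob_eq (η (frob K ^ 2) • K - η (frob L ^ 2) • L),
        CarreauAux.frob_eq (K - L), CarreauAux.toE_sub, CarreauAux.toE_sub]
      exact h2
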